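/- arXiv:2008.07147 — 4 statements merged into one kernel-verified Lean document; each statement's English description precedes it below -/
import Mathlib

section
/- Let q ∈ L²((0,1),ℂ), γ ∈ ℂ \ {0}, and a ∈ [0,1] with 2a ≤ 1. Define w ∈ L²(0,1) by w(x) = γ²·q(a+x) + q(a−x) for x ∈ (0,a), w(x) = γ·q(a+1−x) + γ²·q(a+x) for x ∈ (a,1−a), and w(x) = γ·(q(a+1−x) + q(a−1+x)) for x ∈ (1−a,1). Then for every λ = ρ² ∈ ℂ the characteristic function satisfies Δ(λ) = 1 + γ² − 2γ·cos ρ − ∫₀¹ w(x)·(sin(ρx)/ρ) dx. -/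
open MeasureTheory Complex Set Filter

/-- `sin(ρ s)/ρ`, interpreted as `s` when `ρ = 0`. -/
noncomputable def sdiv (ρ s : ℂ) : ℂ := if ρ = 0 then s else Complex.sin (ρ * s) / ρ

/-- The solution `C(x, ρ²)` of the frozen-argument equation with `C(a) = 1`, `C'(a) = 0`. -/
noncomputable def Cfun (q : ℝ → ℂ) (a : ℝ) (ρ : ℂ) (x : ℝ) : ℂ :=
  Complex.cos (ρ * ((x : ℂ) - (a : ℂ))) + ∫ t in a..x, sdiv ρ ((x : ℂ) - (t : ℂ)) * q t

/-- The solution `S(x, ρ²)` with `S(a) = 0`, `S'(a) = 1`. -/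
noncomputable def Sfun (a : ℝ) (ρ : ℂ) (x : ℝ) : ℂ := sdiv ρ ((x : ℂ) - (a : ℂ))

/-- The derivative `C'(x, ρ²)`. -/
noncomputable def Cfun' (q : ℝ → ℂ) (a : ℝ) (ρ : ℂ) (x : ℝ) : ℂ :=
  -ρ * Complex.sin (ρ * ((x : ℂ) - (a : ℂ))) + ∫ t in a..x, Complex.cos (ρ * ((x : ℂ) - (t : ℂ))) * q t

/-- The derivative `S'(x, ρ²)`. -/
noncomputable def Sfun' (a : ℝ) (ρ : ℂ) (x : ℝ) : ℂ := Complex.cos (ρ * ((x : ℂ) - (a : ℂ)))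

/-- The characteristic function of `L(q, a, γ)`, as a function of `ρ` (where `λ = ρ²`). -/
noncomputable def charAux (q : ℝ → ℂ) (a : ℝ) (γ : ℂ) (ρ : ℂ) : ℂ :=
  (Cfun q a ρ 0 - γ * Cfun q a ρ 1) * (Sfun' a ρ 0 - γ * Sfun' a ρ 1)
    - (Sfun a ρ 0 - γ * Sfun a ρ 1) * (Cfun' q a ρ 0 - γ * Cfun' q a ρ 1)

/-- The characteristic function `Δ(λ)` of `L(q, a, γ)`; all entries are even in `ρ`,
so any square root of `λ` may be used. -/
noncomputable def charFun (q : ℝ → ℂ) (a : ℝ) (γ : ℂ) (lam : ℂ) : ℂ :=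
  charAux q a γ (lam ^ (1/2 : ℂ))

/-- `f` vanishes at `μ` to order exactly `m`. -/
def vanishesToOrder (f : ℂ → ℂ) (μ : ℂ) (m : ℕ) : Prop :=
  ∃ g : ℂ → ℂ, AnalyticAt ℂ g μ ∧ g μ ≠ 0 ∧ ∀ᶠ z in nhds μ, f z = (z - μ) ^ m * g z

/-- Two entire functions have the same zeros with the same multiplicities. -/
def sameSpectrum (f g : ℂ → ℂ) : Prop :=
  ∀ μ : ℂ, ∀ m : ℕ, vanishesToOrder f μ m ↔ vanishesToOrder g μ m

/-- `lam` enumerates the zeros of `f` with multiplicities: for every `μ` the order of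
vanishing of `f` at `μ` equals the number of indices `n` with `lam n = μ`. -/
def isSpectrum (f : ℂ → ℂ) (lam : ℕ → ℂ) : Prop :=
  ∀ μ : ℂ, vanishesToOrder f μ ({n : ℕ | lam n = μ}.ncard)

/-- The region in which the branch `α` is chosen. -/
def alphaRegion : Set ℂ :=
  {z | (0 ≤ z.re ∧ z.re ≤ 1 ∧ 0 ≤ z.im) ∨ (0 < z.re ∧ z.re < 1 ∧ z.im < 0)}

/-- `ρ⁰_{n,α}`: equals `(2k+α)π` for `n = 2k` and `(2k−α)π` for `n = 2k−1`. -/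
noncomputable def rho0 (α : ℂ) (n : ℕ) : ℂ :=
  if n % 2 = 0 then ((n : ℂ) + α) * (Real.pi : ℂ) else (((n : ℂ) + 1) - α) * (Real.pi : ℂ)

/-- The asymptotics `λ_{2k} = (2k+α)²π² + κ_{2k}`, `λ_{2k-1} = (2k-α)²π² + κ_{2k-1}`,
with `{κ_n} ∈ ℓ²`. -/
def spectralAsymptotics (α : ℂ) (lam : ℕ → ℂ) : Prop :=
  ∃ κ : ℕ → ℂ, (Summable fun n => ‖κ n‖ ^ 2) ∧ ∀ n, lam n = (rho0 α n) ^ 2 + κ n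

/-- The degenerate asymptotics: `λ_{2k} = (2k+α)²π² + κ_k` with `{κ_k} ∈ ℓ²`, while
`λ_{2k-1} = (2k-α)²π²` exactly. -/
def degenerateAsymptotics (α : ℂ) (lam : ℕ → ℂ) : Prop :=
  (∀ n, n % 2 = 1 → lam n = (rho0 α n) ^ 2) ∧
  ∃ κ : ℕ → ℂ, (Summable fun k => ‖κ k‖ ^ 2) ∧ ∀ k, lam (2 * k) = (rho0 α (2 * k)) ^ 2 + κ k

/-- The shifted potential `q_a` from Lemma 4 (for `a = 0` it is `q` itself on `(0,1)`). -/
noncomputable def qShift (q : ℝ → ℂ) (a : ℝ) (γ : ℂ) (x : ℝ) : ℂ :=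
  if x < 1 - a then q (x + a) else γ⁻¹ * q (x + a - 1)


section FundamentalRepresentationAux

lemma sdiv_continuous (ρ : ℂ) : Continuous (sdiv ρ) := by
  unfold _root_.sdiv
  split_ifs with h
  · exact continuous_id
  · exact (Complex.continuous_sin.comp (continuous_const.mul continuous_id)).div_const ρ

lemma sdiv_neg_arg (ρ s : ℂ) : sdiv ρ (-s) = -sdiv ρ s := by
  unfold _root_.sdiv; split_ifs with h
  · rfl
  · rw [mul_neg, Complex.sin_neg, neg_div]

lemma sdiv_neg_rho (ρ s : ℂ) : sdiv (-ρ) s = sdiv ρ s := by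
  unfold _root_.sdiv
  rcases eq_or_ne ρ 0 with h | h
  · simp [h]
  · rw [if_neg (neg_ne_zero.mpr h), if_neg h, neg_mul, Complex.sin_neg, neg_div_neg_eq]

lemma rho_mul_sdiv (ρ s : ℂ) : ρ * sdiv ρ s = Complex.sin (ρ * s) := by
  unfold _root_.sdiv; split_ifs with h
  · simp [h]
  · field_simp

lemma sdiv_sub_id (ρ u v : ℂ) :
    Complex.cos (ρ * u) * sdiv ρ v - sdiv ρ u * Complex.cos (ρ * v) = sdiv ρ (v - u) := by
  unfold _root_.sdiv; split_ifs with h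
  · simp [h]
  · have harg : ρ * (v - u) = ρ * v - ρ * u := by ring
    rw [harg, Complex.sin_sub]; field_simp

lemma sdiv_add_id (ρ u v : ℂ) :
    Complex.cos (ρ * u) * sdiv ρ v + sdiv ρ u * Complex.cos (ρ * v) = sdiv ρ (u + v) := by
  unfold _root_.sdiv; split_ifs with h
  · simp [h]; ring
  · have harg : ρ * (u + v) = ρ * u + ρ * v := by ring
    rw [harg, Complex.sin_add]; field_simp; ring

lemma eqOn_Ioo_ae_restrict_Ioc {f g : ℝ → ℂ} {c d : ℝ} (h : ∀ x ∈ Set.Ioo c d, f x = g x) :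
    f =ᵐ[volume.restrict (Set.Ioc c d)] g := by
  have hd : ∀ᵐ x : ℝ ∂volume, x ≠ d := compl_mem_ae_iff.mpr Real.volume_singleton
  rw [Filter.EventuallyEq, ae_restrict_iff' measurableSet_Ioc]
  filter_upwards [hd] with x hx hmem
  exact h x ⟨hmem.1, lt_of_le_of_ne hmem.2 hx⟩

lemma charAux_eq (q : ℝ → ℂ) (a : ℝ) (γ ρ : ℂ)
    (h1 : IntervalIntegrable q volume 0 a) (h2 : IntervalIntegrable q volume a 1) :
    charAux q a γ ρ = 1 + γ ^ 2 - 2 * γ * Complex.cos ρ -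
      ((∫ t in (0:ℝ)..a, sdiv ρ ((a : ℂ) - (t : ℂ)) * q t)
        + γ * (∫ t in (0:ℝ)..a, sdiv ρ (1 - (a : ℂ) + (t : ℂ)) * q t)
        + γ * (∫ t in a..(1:ℝ), sdiv ρ (1 + (a : ℂ) - (t : ℂ)) * q t)
        + γ ^ 2 * (∫ t in a..(1:ℝ), sdiv ρ ((t : ℂ) - (a : ℂ)) * q t)) := by
  have hcsd : Continuous fun t : ℝ => sdiv ρ (t : ℂ) :=
    (sdiv_continuous ρ).comp Complex.continuous_ofReal
  have hcsd' : Continuous fun t : ℝ => sdiv ρ (1 - (t : ℂ)) :=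
    (sdiv_continuous ρ).comp (continuous_const.sub Complex.continuous_ofReal)
  have hccos : Continuous fun t : ℝ => Complex.cos (ρ * (t : ℂ)) :=
    Complex.continuous_cos.comp (continuous_const.mul Complex.continuous_ofReal)
  have hccos' : Continuous fun t : ℝ => Complex.cos (ρ * (1 - (t : ℂ))) :=
    Complex.continuous_cos.comp
      (continuous_const.mul (continuous_const.sub Complex.continuous_ofReal))
  have hK1i : IntervalIntegrable (fun t => sdiv ρ (t : ℂ) * q t) volume 0 a :=
    h1.continuousOn_mul hcsd.continuousOn
  have hK2i : IntervalIntegrable (fun t => sdiv ρ (1 - (t : ℂ)) * q t) volume a 1 :=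
    h2.continuousOn_mul hcsd'.continuousOn
  have hJ1i : IntervalIntegrable (fun t => Complex.cos (ρ * (t : ℂ)) * q t) volume 0 a :=
    h1.continuousOn_mul hccos.continuousOn
  have hJ2i : IntervalIntegrable (fun t => Complex.cos (ρ * (1 - (t : ℂ))) * q t) volume a 1 :=
    h2.continuousOn_mul hccos'.continuousOn
  set K1 := ∫ t in (0:ℝ)..a, sdiv ρ (t : ℂ) * q t with hK1
  set K2 := ∫ t in a..(1:ℝ), sdiv ρ (1 - (t : ℂ)) * q t with hK2
  set J1 := ∫ t in (0:ℝ)..a, Complex.cos (ρ * (t : ℂ)) * q t with hJ1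
  set J2 := ∫ t in a..(1:ℝ), Complex.cos (ρ * (1 - (t : ℂ))) * q t with hJ2
  have hC0 : Cfun q a ρ 0 = Complex.cos (ρ * (a : ℂ)) + K1 := by
    unfold Cfun
    have e1 : Complex.cos (ρ * (((0:ℝ) : ℂ) - (a : ℂ))) = Complex.cos (ρ * (a : ℂ)) := by
      push_cast; rw [zero_sub, mul_neg, Complex.cos_neg]
    have e2 : (∫ t in a..(0:ℝ), sdiv ρ (((0:ℝ) : ℂ) - (t : ℂ)) * q t) = K1 := by
      rw [intervalIntegral.integral_symm]
      have hpt : Set.EqOn (fun t : ℝ => sdiv ρ (((0:ℝ) : ℂ) - (t : ℂ)) * q t)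
          (fun t : ℝ => -(sdiv ρ (t : ℂ) * q t)) (Set.uIcc (0:ℝ) a) := by
        intro t _
        simp only
        push_cast
        rw [zero_sub, sdiv_neg_arg]; ring
      rw [intervalIntegral.integral_congr hpt, intervalIntegral.integral_neg, neg_neg]
    rw [e1, e2]
  have hC1 : Cfun q a ρ 1 = Complex.cos (ρ * (1 - (a : ℂ))) + K2 := by
    unfold Cfun
    norm_num
    rfl
  have hC'0 : Cfun' q a ρ 0 = ρ * Complex.sin (ρ * (a : ℂ)) - J1 := by
    unfold Cfun'
    have e1 : -ρ * Complex.sin (ρ * (((0:ℝ) : ℂ) - (a : ℂ))) = ρ * Complex.sin (ρ * (a : ℂ)) := by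
      push_cast; rw [zero_sub, mul_neg, Complex.sin_neg]; ring
    have e2 : (∫ t in a..(0:ℝ), Complex.cos (ρ * (((0:ℝ) : ℂ) - (t : ℂ))) * q t) = -J1 := by
      rw [intervalIntegral.integral_symm]
      congr 1
      apply intervalIntegral.integral_congr
      intro t _
      simp only
      push_cast
      rw [zero_sub, mul_neg, Complex.cos_neg]
    rw [e1, e2]
    ring
  have hC'1 : Cfun' q a ρ 1 = -ρ * Complex.sin (ρ * (1 - (a : ℂ))) + J2 := by
    unfold Cfun'
    norm_num
    rfl
  have hS0 : Sfun a ρ 0 = -sdiv ρ (a : ℂ) := by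
    unfold Sfun; push_cast; rw [zero_sub, sdiv_neg_arg]
  have hS1 : Sfun a ρ 1 = sdiv ρ (1 - (a : ℂ)) := by
    unfold Sfun; norm_num
  have hS'0 : Sfun' a ρ 0 = Complex.cos (ρ * (a : ℂ)) := by
    unfold Sfun'; push_cast; rw [zero_sub, mul_neg, Complex.cos_neg]
  have hS'1 : Sfun' a ρ 1 = Complex.cos (ρ * (1 - (a : ℂ))) := by
    unfold Sfun'; norm_num
  have hT1 : (∫ t in (0:ℝ)..a, sdiv ρ ((a : ℂ) - (t : ℂ)) * q t)
      = sdiv ρ (a : ℂ) * J1 - Complex.cos (ρ * (a : ℂ)) * K1 := by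
    have hpt : Set.EqOn (fun t : ℝ => sdiv ρ ((a : ℂ) - (t : ℂ)) * q t)
        (fun t : ℝ => sdiv ρ (a : ℂ) * (Complex.cos (ρ * (t : ℂ)) * q t)
          - Complex.cos (ρ * (a : ℂ)) * (sdiv ρ (t : ℂ) * q t)) (Set.uIcc (0:ℝ) a) := by
      intro t _
      simp only
      rw [← sdiv_sub_id ρ (t : ℂ) (a : ℂ)]; ring
    rw [intervalIntegral.integral_congr hpt,
      intervalIntegral.integral_sub (hJ1i.const_mul _) (hK1i.const_mul _),
      intervalIntegral.integral_const_mul, intervalIntegral.integral_const_mul]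
  have hT2 : (∫ t in (0:ℝ)..a, sdiv ρ (1 - (a : ℂ) + (t : ℂ)) * q t)
      = Complex.cos (ρ * (1 - (a : ℂ))) * K1 + sdiv ρ (1 - (a : ℂ)) * J1 := by
    have hpt : Set.EqOn (fun t : ℝ => sdiv ρ (1 - (a : ℂ) + (t : ℂ)) * q t)
        (fun t : ℝ => Complex.cos (ρ * (1 - (a : ℂ))) * (sdiv ρ (t : ℂ) * q t)
          + sdiv ρ (1 - (a : ℂ)) * (Complex.cos (ρ * (t : ℂ)) * q t)) (Set.uIcc (0:ℝ) a) := by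
      intro t _
      simp only
      rw [← sdiv_add_id ρ (1 - (a : ℂ)) (t : ℂ)]; ring
    rw [intervalIntegral.integral_congr hpt,
      intervalIntegral.integral_add (hK1i.const_mul _) (hJ1i.const_mul _),
      intervalIntegral.integral_const_mul, intervalIntegral.integral_const_mul]
  have hT3 : (∫ t in a..(1:ℝ), sdiv ρ (1 + (a : ℂ) - (t : ℂ)) * q t)
      = Complex.cos (ρ * (a : ℂ)) * K2 + sdiv ρ (a : ℂ) * J2 := by
    have hpt : Set.EqOn (fun t : ℝ => sdiv ρ (1 + (a : ℂ) - (t : ℂ)) * q t)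
        (fun t : ℝ => Complex.cos (ρ * (a : ℂ)) * (sdiv ρ (1 - (t : ℂ)) * q t)
          + sdiv ρ (a : ℂ) * (Complex.cos (ρ * (1 - (t : ℂ))) * q t)) (Set.uIcc a (1:ℝ)) := by
      intro t _
      simp only
      have hid := sdiv_add_id ρ (a : ℂ) (1 - (t : ℂ))
      rw [show (1 : ℂ) + (a : ℂ) - (t : ℂ) = (a : ℂ) + (1 - (t : ℂ)) by ring, ← hid]; ring
    rw [intervalIntegral.integral_congr hpt,
      intervalIntegral.integral_add (hK2i.const_mul _) (hJ2i.const_mul _),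
      intervalIntegral.integral_const_mul, intervalIntegral.integral_const_mul]
  have hT4 : (∫ t in a..(1:ℝ), sdiv ρ ((t : ℂ) - (a : ℂ)) * q t)
      = sdiv ρ (1 - (a : ℂ)) * J2 - Complex.cos (ρ * (1 - (a : ℂ))) * K2 := by
    have hpt : Set.EqOn (fun t : ℝ => sdiv ρ ((t : ℂ) - (a : ℂ)) * q t)
        (fun t : ℝ => sdiv ρ (1 - (a : ℂ)) * (Complex.cos (ρ * (1 - (t : ℂ))) * q t)
          - Complex.cos (ρ * (1 - (a : ℂ))) * (sdiv ρ (1 - (t : ℂ)) * q t)) (Set.uIcc a (1:ℝ)) := by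
      intro t _
      simp only
      have hid := sdiv_sub_id ρ (1 - (t : ℂ)) (1 - (a : ℂ))
      rw [show (t : ℂ) - (a : ℂ) = (1 - (a : ℂ)) - (1 - (t : ℂ)) by ring, ← hid]; ring
    rw [intervalIntegral.integral_congr hpt,
      intervalIntegral.integral_sub (hJ2i.const_mul _) (hK2i.const_mul _),
      intervalIntegral.integral_const_mul, intervalIntegral.integral_const_mul]
  rw [charAux, hC0, hC1, hC'0, hC'1, hS0, hS1, hS'0, hS'1, hT1, hT2, hT3, hT4]
  have hP1 := Complex.sin_sq_add_cos_sq (ρ * (a : ℂ))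
  have hP2 := Complex.sin_sq_add_cos_sq (ρ * (1 - (a : ℂ)))
  have hP3 : Complex.cos ρ = Complex.cos (ρ * (a : ℂ)) * Complex.cos (ρ * (1 - (a : ℂ)))
      - Complex.sin (ρ * (a : ℂ)) * Complex.sin (ρ * (1 - (a : ℂ))) := by
    conv_lhs => rw [show ρ = ρ * (a : ℂ) + ρ * (1 - (a : ℂ)) by ring, Complex.cos_add]
  have hQ1 := rho_mul_sdiv ρ (a : ℂ)
  have hQ2 := rho_mul_sdiv ρ (1 - (a : ℂ))
  linear_combination hP1 + γ ^ 2 * hP2 + 2 * γ * hP3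
    + (Complex.sin (ρ * (a : ℂ)) + γ * Complex.sin (ρ * (1 - (a : ℂ)))) * hQ1
    + (γ * Complex.sin (ρ * (a : ℂ)) + γ ^ 2 * Complex.sin (ρ * (1 - (a : ℂ)))) * hQ2

end FundamentalRepresentationAux

/-- Lemma 1: the fundamental representation of the characteristic function. -/
theorem charFun_eq_fundamental_representation
    (q : ℝ → ℂ) (hq : MemLp q 2 (volume.restrict (Set.Ioo (0:ℝ) 1)))
    (γ : ℂ) (hγ : γ ≠ 0) (a : ℝ) (ha : a ∈ Set.Icc (0:ℝ) 1) (ha2 : 2 * a ≤ 1)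
    (w : ℝ → ℂ)
    (hw₁ : ∀ x ∈ Set.Ioo (0:ℝ) a, w x = γ ^ 2 * q (a + x) + q (a - x))
    (hw₂ : ∀ x ∈ Set.Ioo a (1 - a), w x = γ * q (a + 1 - x) + γ ^ 2 * q (a + x))
    (hw₃ : ∀ x ∈ Set.Ioo (1 - a) (1:ℝ), w x = γ * (q (a + 1 - x) + q (a - 1 + x))) :
    ∀ ρ : ℂ, charFun q a γ (ρ ^ 2) =
      1 + γ ^ 2 - 2 * γ * Complex.cos ρ - ∫ x in (0:ℝ)..1, w x * sdiv ρ (x : ℂ) := by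
  intro ρ
  obtain ⟨ha0, ha1⟩ := ha
  have haa : a ≤ 1 - a := by linarith
  -- integrability of q on subintervals of [0,1]
  have hqI : IntegrableOn q (Set.Ioc (0:ℝ) 1) volume := by
    haveI : IsFiniteMeasure (volume.restrict (Set.Ioo (0:ℝ) 1)) := by
      constructor
      rw [Measure.restrict_apply_univ]
      exact measure_Ioo_lt_top
    have h := (hq.mono_exponent (by norm_num)).integrable le_rfl
    exact (integrableOn_Ioc_iff_integrableOn_Ioo).mpr h
  have hsub : ∀ c d : ℝ, 0 ≤ c → d ≤ 1 → c ≤ d → IntervalIntegrable q volume c d := by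
    intro c d hc hd hcd
    rw [intervalIntegrable_iff_integrableOn_Ioc_of_le hcd]
    exact hqI.mono_set (Set.Ioc_subset_Ioc hc hd)
  have h1 : IntervalIntegrable q volume 0 a := hsub 0 a le_rfl ha1 ha0
  have h2 : IntervalIntegrable q volume a 1 := hsub a 1 ha0 le_rfl ha1
  -- the full formula for every ρ'
  have key : ∀ ρ' : ℂ, charAux q a γ ρ' =
      1 + γ ^ 2 - 2 * γ * Complex.cos ρ' - ∫ x in (0:ℝ)..1, w x * sdiv ρ' (x : ℂ) := by
    intro ρ'
    rw [charAux_eq q a γ ρ' h1 h2]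
    congr 1
    have hs : Continuous fun x : ℝ => sdiv ρ' (x : ℂ) :=
      (sdiv_continuous ρ').comp Complex.continuous_ofReal
    -- integrability of the shifted q pieces
    have hqa : IntervalIntegrable (fun x => q (a + x)) volume 0 (1 - a) := by
      have h := h2.comp_add_right a
      simp only [sub_self] at h
      have heq : (fun x : ℝ => q (x + a)) = fun x => q (a + x) := by
        funext x; rw [add_comm]
      rw [heq] at h
      exact h
    have hqma : IntervalIntegrable (fun x => q (a - x)) volume 0 a := by
      have h := h1.comp_sub_left a
      simp only [sub_self, sub_zero] at h
      exact h.symm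
    have hqp1 : IntervalIntegrable (fun x => q (a + 1 - x)) volume a 1 := by
      have h := h2.comp_sub_left (a + 1)
      simp only [add_sub_cancel_left, add_sub_cancel_right] at h
      exact h.symm
    have hqm1 : IntervalIntegrable (fun x => q (a - 1 + x)) volume (1 - a) 1 := by
      have h := h1.comp_add_right (a - 1)
      have heq : (fun x : ℝ => q (x + (a - 1))) = fun x => q (a - 1 + x) := by
        funext x; rw [add_comm]
      rw [heq, show (0:ℝ) - (a - 1) = 1 - a by ring, show a - (a - 1) = 1 by ring] at h
      exact h
    -- interval inclusions
    have hI1 : Set.uIcc (0:ℝ) a ⊆ Set.uIcc 0 (1 - a) := by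
      rw [Set.uIcc_of_le ha0, Set.uIcc_of_le (by linarith : (0:ℝ) ≤ 1 - a)]
      exact Set.Icc_subset_Icc le_rfl haa
    have hI2 : Set.uIcc a (1 - a) ⊆ Set.uIcc 0 (1 - a) := by
      rw [Set.uIcc_of_le haa, Set.uIcc_of_le (by linarith : (0:ℝ) ≤ 1 - a)]
      exact Set.Icc_subset_Icc ha0 le_rfl
    have hI3 : Set.uIcc a (1 - a) ⊆ Set.uIcc a 1 := by
      rw [Set.uIcc_of_le haa, Set.uIcc_of_le (by linarith : a ≤ (1:ℝ))]
      exact Set.Icc_subset_Icc le_rfl (by linarith)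
    have hI4 : Set.uIcc (1 - a) 1 ⊆ Set.uIcc a 1 := by
      rw [Set.uIcc_of_le (by linarith : 1 - a ≤ (1:ℝ)), Set.uIcc_of_le (by linarith : a ≤ (1:ℝ))]
      exact Set.Icc_subset_Icc haa le_rfl
    -- products with the continuous factor
    have hg_pa0 : IntervalIntegrable (fun x => q (a + x) * sdiv ρ' (x : ℂ)) volume 0 a :=
      (hqa.mono_set hI1).mul_continuousOn hs.continuousOn
    have hg_pam : IntervalIntegrable (fun x => q (a + x) * sdiv ρ' (x : ℂ)) volume a (1 - a) :=
      (hqa.mono_set hI2).mul_continuousOn hs.continuousOn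
    have hg_ma : IntervalIntegrable (fun x => q (a - x) * sdiv ρ' (x : ℂ)) volume 0 a :=
      hqma.mul_continuousOn hs.continuousOn
    have hg_p1m : IntervalIntegrable (fun x => q (a + 1 - x) * sdiv ρ' (x : ℂ)) volume a (1 - a) :=
      (hqp1.mono_set hI3).mul_continuousOn hs.continuousOn
    have hg_p1r : IntervalIntegrable (fun x => q (a + 1 - x) * sdiv ρ' (x : ℂ)) volume (1 - a) 1 :=
      (hqp1.mono_set hI4).mul_continuousOn hs.continuousOn
    have hg_m1 : IntervalIntegrable (fun x => q (a - 1 + x) * sdiv ρ' (x : ℂ)) volume (1 - a) 1 :=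
      hqm1.mul_continuousOn hs.continuousOn
    -- integrability of w * s on the three pieces
    have hw1i : IntervalIntegrable (fun x => w x * sdiv ρ' (x : ℂ)) volume 0 a := by
      rw [intervalIntegrable_iff_integrableOn_Ioc_of_le ha0]
      have hbase : IntervalIntegrable
          (fun x => (γ ^ 2 * q (a + x) + q (a - x)) * sdiv ρ' (x : ℂ)) volume 0 a :=
        (((hqa.mono_set hI1).const_mul _).add hqma).mul_continuousOn hs.continuousOn
      refine ((intervalIntegrable_iff_integrableOn_Ioc_of_le ha0).mp hbase).congr ?_
      exact eqOn_Ioo_ae_restrict_Ioc fun x hx => by rw [hw₁ x hx]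
    have hw2i : IntervalIntegrable (fun x => w x * sdiv ρ' (x : ℂ)) volume a (1 - a) := by
      rw [intervalIntegrable_iff_integrableOn_Ioc_of_le haa]
      have hbase : IntervalIntegrable
          (fun x => (γ * q (a + 1 - x) + γ ^ 2 * q (a + x)) * sdiv ρ' (x : ℂ)) volume a (1 - a) :=
        (((hqp1.mono_set hI3).const_mul _).add
          ((hqa.mono_set hI2).const_mul _)).mul_continuousOn hs.continuousOn
      refine ((intervalIntegrable_iff_integrableOn_Ioc_of_le haa).mp hbase).congr ?_
      exact eqOn_Ioo_ae_restrict_Ioc fun x hx => by rw [hw₂ x hx]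
    have hw3i : IntervalIntegrable (fun x => w x * sdiv ρ' (x : ℂ)) volume (1 - a) 1 := by
      rw [intervalIntegrable_iff_integrableOn_Ioc_of_le (by linarith : 1 - a ≤ (1:ℝ))]
      have hbase : IntervalIntegrable
          (fun x => (γ * (q (a + 1 - x) + q (a - 1 + x))) * sdiv ρ' (x : ℂ)) volume (1 - a) 1 :=
        (((hqp1.mono_set hI4).add hqm1).const_mul _).mul_continuousOn hs.continuousOn
      refine ((intervalIntegrable_iff_integrableOn_Ioc_of_le
        (by linarith : 1 - a ≤ (1:ℝ))).mp hbase).congr ?_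
      exact eqOn_Ioo_ae_restrict_Ioc fun x hx => by rw [hw₃ x hx]
    -- split the integral of w * s
    have hsplit : (∫ x in (0:ℝ)..1, w x * sdiv ρ' (x : ℂ))
        = (∫ x in (0:ℝ)..a, w x * sdiv ρ' (x : ℂ))
          + (∫ x in a..(1 - a), w x * sdiv ρ' (x : ℂ))
          + ∫ x in (1 - a)..(1:ℝ), w x * sdiv ρ' (x : ℂ) := by
      rw [intervalIntegral.integral_add_adjacent_intervals hw1i hw2i,
        intervalIntegral.integral_add_adjacent_intervals (hw1i.trans hw2i) hw3i]
    -- expand each piece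
    have e1 : (∫ x in (0:ℝ)..a, w x * sdiv ρ' (x : ℂ))
        = γ ^ 2 * (∫ x in (0:ℝ)..a, q (a + x) * sdiv ρ' (x : ℂ))
          + ∫ x in (0:ℝ)..a, q (a - x) * sdiv ρ' (x : ℂ) := by
      have hwEq : (∫ x in (0:ℝ)..a, w x * sdiv ρ' (x : ℂ))
          = ∫ x in (0:ℝ)..a, (γ ^ 2 * q (a + x) + q (a - x)) * sdiv ρ' (x : ℂ) := by
        rw [intervalIntegral.integral_of_le ha0, intervalIntegral.integral_of_le ha0]
        exact integral_congr_ae (eqOn_Ioo_ae_restrict_Ioc fun x hx => by rw [hw₁ x hx])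
      rw [hwEq]
      have hpt : Set.EqOn (fun x : ℝ => (γ ^ 2 * q (a + x) + q (a - x)) * sdiv ρ' (x : ℂ))
          (fun x : ℝ => γ ^ 2 * (q (a + x) * sdiv ρ' (x : ℂ)) + q (a - x) * sdiv ρ' (x : ℂ))
          (Set.uIcc (0:ℝ) a) := fun x _ => by simp only; ring
      rw [intervalIntegral.integral_congr hpt,
        intervalIntegral.integral_add (hg_pa0.const_mul _) hg_ma,
        intervalIntegral.integral_const_mul]
    have e2 : (∫ x in a..(1 - a), w x * sdiv ρ' (x : ℂ))
        = γ * (∫ x in a..(1 - a), q (a + 1 - x) * sdiv ρ' (x : ℂ))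
          + γ ^ 2 * ∫ x in a..(1 - a), q (a + x) * sdiv ρ' (x : ℂ) := by
      have hwEq : (∫ x in a..(1 - a), w x * sdiv ρ' (x : ℂ))
          = ∫ x in a..(1 - a), (γ * q (a + 1 - x) + γ ^ 2 * q (a + x)) * sdiv ρ' (x : ℂ) := by
        rw [intervalIntegral.integral_of_le haa, intervalIntegral.integral_of_le haa]
        exact integral_congr_ae (eqOn_Ioo_ae_restrict_Ioc fun x hx => by rw [hw₂ x hx])
      rw [hwEq]
      have hpt : Set.EqOn (fun x : ℝ => (γ * q (a + 1 - x) + γ ^ 2 * q (a + x)) * sdiv ρ' (x : ℂ))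
          (fun x : ℝ => γ * (q (a + 1 - x) * sdiv ρ' (x : ℂ))
            + γ ^ 2 * (q (a + x) * sdiv ρ' (x : ℂ)))
          (Set.uIcc a (1 - a)) := fun x _ => by simp only; ring
      rw [intervalIntegral.integral_congr hpt,
        intervalIntegral.integral_add (hg_p1m.const_mul _) (hg_pam.const_mul _),
        intervalIntegral.integral_const_mul, intervalIntegral.integral_const_mul]
    have e3 : (∫ x in (1 - a)..(1:ℝ), w x * sdiv ρ' (x : ℂ))
        = γ * (∫ x in (1 - a)..(1:ℝ), q (a + 1 - x) * sdiv ρ' (x : ℂ))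
          + γ * ∫ x in (1 - a)..(1:ℝ), q (a - 1 + x) * sdiv ρ' (x : ℂ) := by
      have h1a : (1:ℝ) - a ≤ 1 := by linarith
      have hwEq : (∫ x in (1 - a)..(1:ℝ), w x * sdiv ρ' (x : ℂ))
          = ∫ x in (1 - a)..(1:ℝ), (γ * (q (a + 1 - x) + q (a - 1 + x))) * sdiv ρ' (x : ℂ) := by
        rw [intervalIntegral.integral_of_le h1a, intervalIntegral.integral_of_le h1a]
        exact integral_congr_ae (eqOn_Ioo_ae_restrict_Ioc fun x hx => by rw [hw₃ x hx])
      rw [hwEq]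
      have hpt : Set.EqOn
          (fun x : ℝ => (γ * (q (a + 1 - x) + q (a - 1 + x))) * sdiv ρ' (x : ℂ))
          (fun x : ℝ => γ * (q (a + 1 - x) * sdiv ρ' (x : ℂ))
            + γ * (q (a - 1 + x) * sdiv ρ' (x : ℂ)))
          (Set.uIcc (1 - a) (1:ℝ)) := fun x _ => by simp only; ring
      rw [intervalIntegral.integral_congr hpt,
        intervalIntegral.integral_add (hg_p1r.const_mul _) (hg_m1.const_mul _),
        intervalIntegral.integral_const_mul, intervalIntegral.integral_const_mul]
    -- combine adjacent pieces
    have hA : (∫ x in (0:ℝ)..a, q (a + x) * sdiv ρ' (x : ℂ))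
        + (∫ x in a..(1 - a), q (a + x) * sdiv ρ' (x : ℂ))
        = ∫ x in (0:ℝ)..(1 - a), q (a + x) * sdiv ρ' (x : ℂ) :=
      intervalIntegral.integral_add_adjacent_intervals hg_pa0 hg_pam
    have hB : (∫ x in a..(1 - a), q (a + 1 - x) * sdiv ρ' (x : ℂ))
        + (∫ x in (1 - a)..(1:ℝ), q (a + 1 - x) * sdiv ρ' (x : ℂ))
        = ∫ x in a..(1:ℝ), q (a + 1 - x) * sdiv ρ' (x : ℂ) :=
      intervalIntegral.integral_add_adjacent_intervals hg_p1m hg_p1r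
    -- change of variables
    have S1 : (∫ x in (0:ℝ)..a, q (a - x) * sdiv ρ' (x : ℂ))
        = ∫ t in (0:ℝ)..a, sdiv ρ' ((a : ℂ) - (t : ℂ)) * q t := by
      have h := intervalIntegral.integral_comp_sub_left
        (a := 0) (b := a) (fun t : ℝ => sdiv ρ' ((a : ℂ) - (t : ℂ)) * q t) a
      simp only [sub_self, sub_zero] at h
      rw [← h]
      apply intervalIntegral.integral_congr
      intro x _
      simp only
      rw [show ((a : ℂ) - ((a - x : ℝ) : ℂ)) = (x : ℂ) by push_cast; ring, mul_comm]
    have S2 : (∫ x in (1 - a)..(1:ℝ), q (a - 1 + x) * sdiv ρ' (x : ℂ))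
        = ∫ t in (0:ℝ)..a, sdiv ρ' (1 - (a : ℂ) + (t : ℂ)) * q t := by
      have h := intervalIntegral.integral_comp_add_right
        (a := 1 - a) (b := 1) (fun t : ℝ => sdiv ρ' (1 - (a : ℂ) + (t : ℂ)) * q t) (a - 1)
      rw [show (1:ℝ) - a + (a - 1) = 0 by ring, show (1:ℝ) + (a - 1) = a by ring] at h
      rw [← h]
      apply intervalIntegral.integral_congr
      intro x _
      simp only
      rw [show x + (a - 1) = a - 1 + x by ring,
        show (1 - (a : ℂ) + ((a - 1 + x : ℝ) : ℂ)) = (x : ℂ) by push_cast; ring, mul_comm]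
    have S3 : (∫ x in a..(1:ℝ), q (a + 1 - x) * sdiv ρ' (x : ℂ))
        = ∫ t in a..(1:ℝ), sdiv ρ' (1 + (a : ℂ) - (t : ℂ)) * q t := by
      have h := intervalIntegral.integral_comp_sub_left
        (a := a) (b := 1) (fun t : ℝ => sdiv ρ' (1 + (a : ℂ) - (t : ℂ)) * q t) (a + 1)
      rw [show a + 1 - 1 = a by ring, show a + 1 - a = (1:ℝ) by ring] at h
      rw [← h]
      apply intervalIntegral.integral_congr
      intro x _
      simp only
      rw [show (1 + (a : ℂ) - ((a + 1 - x : ℝ) : ℂ)) = (x : ℂ) by push_cast; ring, mul_comm]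
    have S4 : (∫ x in (0:ℝ)..(1 - a), q (a + x) * sdiv ρ' (x : ℂ))
        = ∫ t in a..(1:ℝ), sdiv ρ' ((t : ℂ) - (a : ℂ)) * q t := by
      have h := intervalIntegral.integral_comp_add_right
        (a := 0) (b := 1 - a) (fun t : ℝ => sdiv ρ' ((t : ℂ) - (a : ℂ)) * q t) a
      rw [show (0:ℝ) + a = a by ring, show (1:ℝ) - a + a = 1 by ring] at h
      rw [← h]
      apply intervalIntegral.integral_congr
      intro x _
      simp only
      rw [show x + a = a + x by ring,
        show (((a + x : ℝ) : ℂ) - (a : ℂ)) = (x : ℂ) by push_cast; ring, mul_comm]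
    linear_combination -hsplit - e1 - e2 - e3 - γ ^ 2 * hA - γ * hB - S1 - γ * S2
      - γ * S3 - γ ^ 2 * S4
  -- evaluate at the chosen square root
  have hhalf : (1 / 2 : ℂ) = (((2:ℕ)) : ℂ)⁻¹ := by norm_num
  have hτ2 : ((ρ ^ 2) ^ (1 / 2 : ℂ)) ^ 2 = ρ ^ 2 := by
    rw [hhalf]; exact Complex.cpow_nat_inv_pow _ two_ne_zero
  have hcases : (ρ ^ 2) ^ (1 / 2 : ℂ) = ρ ∨ (ρ ^ 2) ^ (1 / 2 : ℂ) = -ρ := by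
    have h0 : (((ρ ^ 2) ^ (1 / 2 : ℂ)) - ρ) * (((ρ ^ 2) ^ (1 / 2 : ℂ)) + ρ) = 0 := by
      linear_combination hτ2
    rcases mul_eq_zero.mp h0 with h | h
    · exact Or.inl (sub_eq_zero.mp h)
    · exact Or.inr (eq_neg_of_add_eq_zero_left h)
  show charAux q a γ ((ρ ^ 2) ^ (1 / 2 : ℂ)) = _
  rw [key]
  rcases hcases with h | h
  · rw [h]
  · rw [h, Complex.cos_neg]
    congr 1
    apply intervalIntegral.integral_congr
    intro x _
    simp only [sdiv_neg_rho]
end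

section
/- Let q ∈ L²((0,1),ℂ) and a ∈ [0,1]. If γ = 1, then the characteristic function of L(q,a,1) vanishes at (2kπ)² for every integer k ≥ 1; if γ = −1, then the characteristic function of L(q,a,−1) vanishes at ((2k−1)π)² for every integer k ≥ 1. That is, in both the periodic and the antiperiodic cases half of the spectrum degenerates: in the asymptotic enumeration λ_{2k−1} = (2k−α)²π² + κ_{2k−1} one may take κ_{2k−1} = 0 for all k ≥ 1. -/
open MeasureTheory Complex Set Filter

lemma charAux_zero (q : ℝ → ℂ) (a : ℝ) (γ ρ : ℂ)
    (h1 : Sfun' a ρ 0 - γ * Sfun' a ρ 1 = 0)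
    (h2 : Sfun a ρ 0 - γ * Sfun a ρ 1 = 0) :
    charAux q a γ ρ = 0 := by
  simp [charAux, h1, h2]

lemma sq_half (r : ℝ) (hr : 0 ≤ r) : (((r : ℂ)) ^ 2) ^ (1/2 : ℂ) = (r : ℂ) := by
  have h : ((r : ℂ)) ^ 2 = (((r ^ 2 : ℝ)) : ℂ) := by push_cast; ring
  rw [h, show (1/2 : ℂ) = ((1/2 : ℝ) : ℂ) by norm_num,
    ← Complex.ofReal_cpow (by positivity)]
  congr 1
  rw [← Real.rpow_natCast r 2, ← Real.rpow_mul hr]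
  norm_num

/-- Theorem 1, degeneration: in the periodic case `γ = 1` the characteristic
function vanishes at `(2kπ)²` for every `k ≥ 1`, and in the antiperiodic case `γ = -1` it
vanishes at `((2k-1)π)²` for every `k ≥ 1`. -/
theorem spectrum_degeneration
    (q : ℝ → ℂ) (hq : MemLp q 2 (volume.restrict (Set.Ioo (0:ℝ) 1)))
    (a : ℝ) (ha : a ∈ Set.Icc (0:ℝ) 1) :
    (∀ k : ℕ, 1 ≤ k → charFun q a 1 ((((2 * k : ℕ) : ℂ) * (Real.pi : ℂ)) ^ 2) = 0) ∧
    (∀ k : ℕ, 1 ≤ k → charFun q a (-1) (((((2 * k : ℕ) : ℂ) - 1) * (Real.pi : ℂ)) ^ 2) = 0) := by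
  have key : ∀ (γ : ℂ) (n : ℤ) (r : ℝ), 0 < r → ((r : ℂ)) = (n : ℂ) * Real.pi →
      Complex.cos ((n : ℂ) * Real.pi) = γ⁻¹ → γ ≠ 0 →
      charFun q a γ (((r : ℝ) : ℂ) ^ 2) = 0 := by
    intro γ n r hr hrn hcos hγ
    have hρ : ((r : ℂ)) ≠ 0 := by
      simp only [ne_eq, Complex.ofReal_eq_zero]
      exact ne_of_gt hr
    rw [_root_.charFun, sq_half r hr.le]
    apply charAux_zero
    · -- S' condition
      simp only [Sfun']
      have e0 : (r : ℂ) * (((0:ℝ) : ℂ) - (a : ℂ)) = -((r:ℂ) * a) := by push_cast; ring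
      have e1 : (r : ℂ) * (((1:ℝ) : ℂ) - (a : ℂ)) = (n : ℂ) * Real.pi - (r:ℂ) * a := by
        rw [← hrn]; push_cast; ring
      rw [e0, e1, Complex.cos_neg, Complex.cos_sub, hcos]
      have hsin : Complex.sin ((n : ℂ) * Real.pi) = 0 := Complex.sin_int_mul_pi n
      rw [hsin]
      field_simp
      simp
    · -- S condition
      simp only [Sfun, _root_.sdiv, if_neg hρ]
      have e0 : (r : ℂ) * (((0:ℝ) : ℂ) - (a : ℂ)) = -((r:ℂ) * a) := by push_cast; ring
      have e1 : (r : ℂ) * (((1:ℝ) : ℂ) - (a : ℂ)) = (n : ℂ) * Real.pi - (r:ℂ) * a := by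
        rw [← hrn]; push_cast; ring
      rw [e0, e1, Complex.sin_neg, Complex.sin_sub, hcos]
      have hsin : Complex.sin ((n : ℂ) * Real.pi) = 0 := Complex.sin_int_mul_pi n
      rw [hsin]
      have hγ' : γ * γ⁻¹ = 1 := mul_inv_cancel₀ hγ
      field_simp
      ring
  constructor
  · intro k hk
    have hr : (0:ℝ) < 2 * k * Real.pi := by
      have : (0:ℝ) < k := by exact_mod_cast hk
      positivity
    have := key 1 (2 * k) (2 * k * Real.pi) hr (by push_cast; ring)
      (by rw [show ((2 * (k:ℤ) : ℤ) : ℂ) * Real.pi = ((k:ℤ) : ℂ) * (2 * Real.pi) by push_cast; ring,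
            Complex.cos_int_mul_two_pi]; norm_num) one_ne_zero
    have e : ((((2 * k : ℕ) : ℂ)) * (Real.pi : ℂ)) = ((2 * k * Real.pi : ℝ) : ℂ) := by
      push_cast; ring
    rw [e]
    exact this
  · intro k hk
    have hk1 : (1:ℝ) ≤ 2 * k - 1 := by
      have : (1:ℝ) ≤ k := by exact_mod_cast hk
      linarith
    have hr : (0:ℝ) < (2 * k - 1) * Real.pi := by
      have := Real.pi_pos
      nlinarith
    have := key (-1) (2 * (k:ℤ) - 1) ((2 * (k:ℝ) - 1) * Real.pi) hr (by push_cast; ring)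
      (by rw [show ((2 * (k:ℤ) - 1 : ℤ) : ℂ) * Real.pi = ((k:ℤ) : ℂ) * (2 * Real.pi) - Real.pi by push_cast; ring,
            Complex.cos_int_mul_two_pi_sub_pi]; norm_num) (by norm_num)
    have e : (((((2 * k : ℕ) : ℂ)) - 1) * (Real.pi : ℂ)) = (((2 * (k:ℝ) - 1) * Real.pi : ℝ) : ℂ) := by
      push_cast; ring
    rw [e]
    exact this
end

section
/- Let w ∈ L²((0,1),ℂ) satisfy w(x) = w(1−x) for a.e. x ∈ (0,1). Then for every ρ ∈ ℂ \ {0}: 2 − 2·cos ρ − ∫₀¹ w(x)·(sin(ρx)/ρ) dx = (2/ρ)·sin(ρ/2)·(2ρ·sin(ρ/2) − ∫₀^{1/2} w(1/2 − x)·cos(ρx) dx). -/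
open MeasureTheory Complex Set Filter

/-- the factorization of the periodic characteristic expression for a
function `w ∈ L²(0,1)` symmetric about `x = 1/2`. -/
theorem periodic_factorization
    (w : ℝ → ℂ) (hw : MemLp w 2 (volume.restrict (Set.Ioo (0:ℝ) 1)))
    (hsym : ∀ᵐ x ∂(volume.restrict (Set.Ioo (0:ℝ) 1)), w x = w (1 - x)) :
    ∀ ρ : ℂ, ρ ≠ 0 →
      2 - 2 * Complex.cos ρ - (∫ x in (0:ℝ)..1, w x * (Complex.sin (ρ * (x : ℂ)) / ρ)) =
      (2 / ρ) * Complex.sin (ρ / 2) *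
        (2 * ρ * Complex.sin (ρ / 2)
          - ∫ x in (0:ℝ)..(1/2 : ℝ), w (1/2 - x) * Complex.cos (ρ * (x : ℂ))) := by

  intro ρ hρ
  -- integrability of w times any continuous function on subintervals of [0,1]
  haveI : IsFiniteMeasure (volume.restrict (Set.Ioo (0:ℝ) 1)) :=
    ⟨by simp [Real.volume_Ioo]⟩
  have hwIoo : IntegrableOn w (Set.Ioo 0 1) := hw.integrable (by norm_num)
  have hwIcc : IntegrableOn w (Set.Icc 0 1) := by
    rw [IntegrableOn, ← Measure.restrict_congr_set Ioo_ae_eq_Icc]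
    exact hwIoo
  have key : ∀ g : ℝ → ℂ, Continuous g → ∀ a b : ℝ, 0 ≤ a → a ≤ b → b ≤ 1 →
      IntervalIntegrable (fun x => w x * g x) volume a b := by
    intro g hg a b ha hab hb
    rw [intervalIntegrable_iff_integrableOn_Ioc_of_le hab]
    exact (hwIcc.mul_continuousOn hg.continuousOn isCompact_Icc).mono_set
      (fun x hx => ⟨le_trans ha (le_of_lt hx.1), le_trans hx.2 hb⟩)
  have csin1 : Continuous fun x : ℝ => Complex.sin (ρ * x) :=
    Complex.continuous_sin.comp (continuous_const.mul Complex.continuous_ofReal)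
  have csin2 : Continuous fun x : ℝ => Complex.sin (ρ * (1 - (x:ℂ))) :=
    Complex.continuous_sin.comp (continuous_const.mul (continuous_const.sub Complex.continuous_ofReal))
  have ccos : Continuous fun x : ℝ => Complex.cos (ρ * ((1:ℂ)/2 - (x:ℂ))) :=
    Complex.continuous_cos.comp (continuous_const.mul (continuous_const.sub Complex.continuous_ofReal))
  -- split the integral
  have hsplit : (∫ x in (0:ℝ)..1, w x * Complex.sin (ρ * (x:ℂ))) =
      (∫ x in (0:ℝ)..(1/2:ℝ), w x * Complex.sin (ρ * (x:ℂ)))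
        + ∫ x in (1/2:ℝ)..1, w x * Complex.sin (ρ * (x:ℂ)) :=
    (intervalIntegral.integral_add_adjacent_intervals
      (key _ csin1 0 (1/2) le_rfl (by norm_num) (by norm_num))
      (key _ csin1 (1/2) 1 (by norm_num) (by norm_num) le_rfl)).symm
  -- substitution on the upper half
  have hsub : (∫ x in (1/2:ℝ)..1, w x * Complex.sin (ρ * (x:ℂ)))
      = ∫ x in (0:ℝ)..(1/2:ℝ), w (1-x) * Complex.sin (ρ * (1 - (x:ℂ))) := by
    have h := intervalIntegral.integral_comp_sub_left (a := 0) (b := 1/2)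
      (fun y : ℝ => w y * Complex.sin (ρ * (y:ℂ))) 1
    norm_num at h
    rw [← h]
  -- symmetry of w
  have hae : ∀ᵐ x ∂(volume.restrict (Set.Ioc (0:ℝ) (1/2))), w (1-x) = w x := by
    have hsub' : Set.Ioc (0:ℝ) (1/2) ⊆ Set.Ioo (0:ℝ) 1 := fun x hx =>
      ⟨hx.1, lt_of_le_of_lt hx.2 (by norm_num)⟩
    exact (ae_restrict_of_ae_restrict_of_subset hsub' hsym).mono fun x hx => hx.symm
  have hsymInt : (∫ x in (0:ℝ)..(1/2:ℝ), w (1-x) * Complex.sin (ρ * (1 - (x:ℂ))))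
      = ∫ x in (0:ℝ)..(1/2:ℝ), w x * Complex.sin (ρ * (1 - (x:ℂ))) := by
    apply intervalIntegral.integral_congr_ae
    rw [Set.uIoc_of_le (by norm_num : (0:ℝ) ≤ 1/2)]
    filter_upwards [(ae_restrict_iff' measurableSet_Ioc).mp hae] with x hx hmem
    rw [hx hmem]
  -- rewrite the cosine integral
  have hcos : (∫ x in (0:ℝ)..(1/2:ℝ), w (1/2 - x) * Complex.cos (ρ * (x:ℂ)))
      = ∫ x in (0:ℝ)..(1/2:ℝ), w x * Complex.cos (ρ * ((1:ℂ)/2 - (x:ℂ))) := by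
    have h := intervalIntegral.integral_comp_sub_left (a := 0) (b := 1/2)
      (fun y : ℝ => w y * Complex.cos (ρ * ((1:ℂ)/2 - (y:ℂ)))) (1/2)
    norm_num at h
    rw [← h]
  -- trig identity
  have trig : ∀ x : ℝ, 2 * Complex.sin (ρ/2) * Complex.cos (ρ * ((1:ℂ)/2 - (x:ℂ)))
      = Complex.sin (ρ * (x:ℂ)) + Complex.sin (ρ * (1 - (x:ℂ))) := by
    intro x
    rw [show ρ * (1 - (x:ℂ)) = ρ/2 + ρ * ((1:ℂ)/2 - (x:ℂ)) by ring,
        show ρ * (x:ℂ) = ρ/2 - ρ * ((1:ℂ)/2 - (x:ℂ)) by ring,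
        Complex.sin_add, Complex.sin_sub]
    ring
  -- linearity relation
  have hJ : (2 * Complex.sin (ρ/2)) *
        (∫ x in (0:ℝ)..(1/2:ℝ), w x * Complex.cos (ρ * ((1:ℂ)/2 - (x:ℂ))))
      = (∫ x in (0:ℝ)..(1/2:ℝ), w x * Complex.sin (ρ * (x:ℂ)))
        + ∫ x in (0:ℝ)..(1/2:ℝ), w x * Complex.sin (ρ * (1 - (x:ℂ))) := by
    rw [← intervalIntegral.integral_const_mul,
        ← intervalIntegral.integral_add
          (key _ csin1 0 (1/2) le_rfl (by norm_num) (by norm_num))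
          (key _ csin2 0 (1/2) le_rfl (by norm_num) (by norm_num))]
    apply intervalIntegral.integral_congr
    intro x _
    have := trig x
    calc 2 * Complex.sin (ρ/2) * (w x * Complex.cos (ρ * ((1:ℂ)/2 - (x:ℂ))))
        = w x * (2 * Complex.sin (ρ/2) * Complex.cos (ρ * ((1:ℂ)/2 - (x:ℂ)))) := by ring
      _ = w x * (Complex.sin (ρ * (x:ℂ)) + Complex.sin (ρ * (1 - (x:ℂ)))) := by rw [this]
      _ = _ := by ring
  -- 2 - 2 cos ρ = 4 sin(ρ/2)^2
  have hcos2 : 2 - 2 * Complex.cos ρ = 4 * Complex.sin (ρ/2)^2 := by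
    have h1 : Complex.cos ρ = Complex.cos (ρ/2)^2 - Complex.sin (ρ/2)^2 := by
      rw [show ρ = ρ/2 + ρ/2 by ring, Complex.cos_add]; ring
    have h2 := Complex.sin_sq_add_cos_sq (ρ/2)
    linear_combination -2 * h1 - 2 * h2
  -- pull out 1/ρ from LHS integral
  have hL : (∫ x in (0:ℝ)..1, w x * (Complex.sin (ρ * (x:ℂ)) / ρ))
      = (∫ x in (0:ℝ)..1, w x * Complex.sin (ρ * (x:ℂ))) / ρ := by
    rw [← intervalIntegral.integral_div]
    simp [mul_div_assoc]
  rw [hL, hsplit, hsub, hsymInt, hcos, hcos2, ← hJ]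
  field_simp
  ring
end

section
/- Let w ∈ L²((0,1),ℂ) satisfy w(x) = −w(1−x) for a.e. x ∈ (0,1). Then for every ρ ∈ ℂ \ {0}: 2 + 2·cos ρ − ∫₀¹ w(x)·(sin(ρx)/ρ) dx = 2·cos(ρ/2)·(2·cos(ρ/2) + ∫₀^{1/2} w(1/2 − x)·(sin(ρx)/ρ) dx). -/
open MeasureTheory Complex Set Filter

private lemma wmul_integrableOn {w : ℝ → ℂ}
    (hw1 : IntegrableOn w (Set.Ioo (0:ℝ) 1) volume)
    (φ : ℝ → ℂ) (hφ : Continuous φ) :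
    IntegrableOn (fun x => w x * φ x) (Set.Ioo (0:ℝ) 1) volume := by
  obtain ⟨C, hC⟩ := (isCompact_Icc : IsCompact (Set.Icc (0:ℝ) 1)).exists_bound_of_continuousOn
    hφ.continuousOn
  have hbd : ∀ᵐ x ∂(volume.restrict (Set.Ioo (0:ℝ) 1)), ‖φ x‖ ≤ C := by
    filter_upwards [ae_restrict_mem measurableSet_Ioo] with x hx
    exact hC x ⟨hx.1.le, hx.2.le⟩
  have := hw1.bdd_mul (hφ.aestronglyMeasurable.restrict) hbd
  simpa [mul_comm, IntegrableOn] using this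

private lemma wmul_intervalIntegrable {w : ℝ → ℂ}
    (hw1 : IntegrableOn w (Set.Ioo (0:ℝ) 1) volume)
    (φ : ℝ → ℂ) (hφ : Continuous φ) {a b : ℝ} (hab : a ≤ b)
    (h0 : 0 ≤ a) (h1 : b ≤ 1) :
    IntervalIntegrable (fun x => w x * φ x) volume a b := by
  rw [intervalIntegrable_iff_integrableOn_Ioo_of_le hab]
  exact (wmul_integrableOn hw1 φ hφ).mono_set (Set.Ioo_subset_Ioo h0 h1)

/-- the factorization of the antiperiodic characteristic expression for a
function `w ∈ L²(0,1)` antisymmetric about `x = 1/2`. -/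
theorem antiperiodic_factorization
    (w : ℝ → ℂ) (hw : MemLp w 2 (volume.restrict (Set.Ioo (0:ℝ) 1)))
    (hsym : ∀ᵐ x ∂(volume.restrict (Set.Ioo (0:ℝ) 1)), w x = -w (1 - x)) :
    ∀ ρ : ℂ, ρ ≠ 0 →
      2 + 2 * Complex.cos ρ - (∫ x in (0:ℝ)..1, w x * (Complex.sin (ρ * (x : ℂ)) / ρ)) =
      2 * Complex.cos (ρ / 2) *
        (2 * Complex.cos (ρ / 2)
          + ∫ x in (0:ℝ)..(1/2 : ℝ), w (1/2 - x) * (Complex.sin (ρ * (x : ℂ)) / ρ)) := by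
  intro ρ hρ
  have hw1 : IntegrableOn w (Set.Ioo (0:ℝ) 1) volume :=
    memLp_one_iff_integrable.mp (hw.mono_exponent (by norm_num))
  have hc1 : Continuous fun x : ℝ => Complex.sin (ρ * (x : ℂ)) / ρ := by fun_prop
  have hc2 : Continuous fun x : ℝ => Complex.sin (ρ * ((1:ℂ) - (x : ℂ))) / ρ := by fun_prop
  have hc3 : Continuous fun x : ℝ => Complex.sin (ρ * ((1/2:ℂ) - (x : ℂ))) / ρ := by fun_prop
  set F : ℝ → ℂ := fun x => w x * (Complex.sin (ρ * (x : ℂ)) / ρ) with hF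
  set G : ℝ → ℂ := fun x => w x * (Complex.sin (ρ * ((1:ℂ) - (x : ℂ))) / ρ) with hG
  set H : ℝ → ℂ := fun x => w x * (Complex.sin (ρ * ((1/2:ℂ) - (x : ℂ))) / ρ) with hH
  have hFi1 : IntervalIntegrable F volume 0 (1/2) :=
    wmul_intervalIntegrable hw1 _ hc1 (by norm_num) le_rfl (by norm_num)
  have hFi2 : IntervalIntegrable F volume (1/2) 1 :=
    wmul_intervalIntegrable hw1 _ hc1 (by norm_num) (by norm_num) le_rfl
  have hGi : IntervalIntegrable G volume 0 (1/2) :=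
    wmul_intervalIntegrable hw1 _ hc2 (by norm_num) le_rfl (by norm_num)
  -- split the integral
  have hsplit : (∫ x in (0:ℝ)..1, F x)
      = (∫ x in (0:ℝ)..(1/2:ℝ), F x) + ∫ x in (1/2:ℝ)..1, F x :=
    (intervalIntegral.integral_add_adjacent_intervals hFi1 hFi2).symm
  -- reflect the second half
  have hrefl : (∫ x in (0:ℝ)..(1/2:ℝ), F (1 - x)) = ∫ x in (1/2:ℝ)..1, F x := by
    rw [intervalIntegral.integral_comp_sub_left F 1]; norm_num
  -- symmetry of w
  have hsym' : ∀ᵐ x ∂(volume : Measure ℝ), x ∈ Set.Ioo (0:ℝ) 1 → w x = -w (1 - x) :=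
    (ae_restrict_iff' measurableSet_Ioo).mp hsym
  have hcongr : (∫ x in (0:ℝ)..(1/2:ℝ), F (1 - x)) = ∫ x in (0:ℝ)..(1/2:ℝ), -G x := by
    apply intervalIntegral.integral_congr_ae
    filter_upwards [hsym'] with x hx hmem
    rw [Set.uIoc_of_le (by norm_num : (0:ℝ) ≤ 1/2)] at hmem
    have hx01 : x ∈ Set.Ioo (0:ℝ) 1 := ⟨hmem.1, by linarith [hmem.2]⟩
    have hw' : w (1 - x) = -w x := by rw [hx hx01]; ring
    simp only [hF, hG]
    rw [hw']
    push_cast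
    ring
  -- combine the two halves
  have hdiff : (∫ x in (0:ℝ)..1, F x) = ∫ x in (0:ℝ)..(1/2:ℝ), (F x - G x) := by
    rw [hsplit, ← hrefl, hcongr, intervalIntegral.integral_neg, ← sub_eq_add_neg,
      ← intervalIntegral.integral_sub hFi1 hGi]
  -- trig identity
  have htrig : ∀ x : ℝ, F x - G x = (-2 * Complex.cos (ρ/2)) * H x := by
    intro x
    have key : Complex.sin (ρ * (x:ℂ)) - Complex.sin (ρ * ((1:ℂ) - (x:ℂ)))
        = -2 * Complex.cos (ρ/2) * Complex.sin (ρ * ((1/2:ℂ) - (x:ℂ))) := by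
      rw [Complex.sin_sub_sin]
      rw [show (ρ * (x:ℂ) - ρ * ((1:ℂ) - (x:ℂ))) / 2 = -(ρ * ((1/2:ℂ) - (x:ℂ))) by ring,
        show (ρ * (x:ℂ) + ρ * ((1:ℂ) - (x:ℂ))) / 2 = ρ / 2 by ring, Complex.sin_neg]
      ring
    simp only [hF, hG, hH]
    calc w x * (Complex.sin (ρ * (x:ℂ)) / ρ)
          - w x * (Complex.sin (ρ * ((1:ℂ) - (x:ℂ))) / ρ)
        = w x * ((Complex.sin (ρ * (x:ℂ)) - Complex.sin (ρ * ((1:ℂ) - (x:ℂ)))) / ρ) := by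
          ring
      _ = w x * ((-2 * Complex.cos (ρ/2) * Complex.sin (ρ * ((1/2:ℂ) - (x:ℂ)))) / ρ) := by
          rw [key]
      _ = (-2 * Complex.cos (ρ/2)) * (w x * (Complex.sin (ρ * ((1/2:ℂ) - (x:ℂ))) / ρ)) := by
          ring
  have hmain : (∫ x in (0:ℝ)..1, F x)
      = (-2 * Complex.cos (ρ/2)) * ∫ x in (0:ℝ)..(1/2:ℝ), H x := by
    rw [hdiff, ← intervalIntegral.integral_const_mul]
    exact intervalIntegral.integral_congr fun x _ => htrig x
  -- reflect H
  have hHrefl : (∫ x in (0:ℝ)..(1/2:ℝ), w (1/2 - x) * (Complex.sin (ρ * (x:ℂ)) / ρ))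
      = ∫ x in (0:ℝ)..(1/2:ℝ), H x := by
    have h1 : (∫ x in (0:ℝ)..(1/2:ℝ), H (1/2 - x)) = ∫ x in (0:ℝ)..(1/2:ℝ), H x := by
      rw [intervalIntegral.integral_comp_sub_left H (1/2)]; norm_num
    rw [← h1]
    apply intervalIntegral.integral_congr
    intro x _
    simp only [hH]
    push_cast
    ring_nf
  -- final algebra
  have hcos : Complex.cos ρ = 2 * Complex.cos (ρ/2) ^ 2 - 1 := by
    have := Complex.cos_sq (ρ/2)
    rw [show 2 * (ρ/2) = ρ by ring] at this
    linear_combination -2 * this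
  rw [hHrefl, hmain, hcos]
  ring
end
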